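/- With π(N) = 1 + (2/3)·Σ_{e≥0, 3^e≤N} 3^{3^e}/3^e, one has limsup_{N→∞} N·π(N)/3^N = 2/3 and liminf_{N→∞} N·π(N)/3^N = 0. -/

import Mathlib

open Filter Finset

noncomputable def pi13 (N : ℕ) : ℝ :=
  1 + (2 / 3) * ∑ e ∈ (Finset.range (N + 1)).filter (fun e => 3 ^ e ≤ N),
    ((3 : ℝ) ^ (3 ^ e) / 3 ^ e)

namespace Pi13Aux

noncomputable def g (N : ℕ) : ℝ := (N : ℝ) * pi13 N / 3 ^ N

lemma filter_eq {N : ℕ} (hN : N ≠ 0) :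
    (Finset.range (N + 1)).filter (fun e => 3 ^ e ≤ N) = Finset.range (Nat.log 3 N + 1) := by
  ext e
  simp only [mem_filter, mem_range, Nat.lt_succ_iff]
  constructor
  · rintro ⟨-, h⟩
    exact (Nat.le_log_iff_pow_le (by norm_num) hN).mpr h
  · intro h
    have h3 : 3 ^ e ≤ N := (Nat.le_log_iff_pow_le (by norm_num) hN).mp h
    exact ⟨le_trans (Nat.lt_pow_self (n := e) (a := 3) (by norm_num)).le h3, h3⟩

lemma g_eq {N : ℕ} (hN : N ≠ 0) :
    g N = (N : ℝ) / 3 ^ N + (2 / 3) * ∑ e ∈ Finset.range (Nat.log 3 N + 1),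
      ((N : ℝ) * ((3 : ℝ) ^ (3 ^ e) / 3 ^ e) / 3 ^ N) := by
  unfold g pi13
  rw [filter_eq hN, mul_add, mul_one, add_div]
  congr 1
  simp only [Finset.mul_sum, Finset.sum_div]
  exact Finset.sum_congr rfl fun e _ => by ring

lemma pow_sub_eq {N m : ℕ} (h : m ≤ N) :
    (3 : ℝ) ^ m / 3 ^ N = (1 / 3 : ℝ) ^ (N - m) := by
  have hN : N = m + (N - m) := (Nat.add_sub_cancel' h).symm
  rw [hN, pow_add, div_pow, one_pow]
  have h1 : (3 : ℝ) ^ m ≠ 0 := by positivity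
  have h2 : (3 : ℝ) ^ (N - m) ≠ 0 := by positivity
  field_simp
  simp

lemma term_eq {N e : ℕ} (h : 3 ^ e ≤ N) :
    (N : ℝ) * ((3 : ℝ) ^ (3 ^ e) / 3 ^ e) / 3 ^ N
      = ((N : ℝ) / 3 ^ e) * (1 / 3 : ℝ) ^ (N - 3 ^ e) := by
  rw [← pow_sub_eq h]; ring

lemma term_le {N e : ℕ} (h : 3 ^ e ≤ N) :
    (N : ℝ) * ((3 : ℝ) ^ (3 ^ e) / 3 ^ e) / 3 ^ N
      ≤ (1 + ((N - 3 ^ e : ℕ) : ℝ)) * (1 / 3 : ℝ) ^ (N - 3 ^ e) := by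
  rw [term_eq h]
  have hb : (N : ℝ) / 3 ^ e ≤ 1 + ((N - 3 ^ e : ℕ) : ℝ) := by
    rw [div_le_iff₀ (by positivity)]
    have hnat : N ≤ (1 + (N - 3 ^ e)) * 3 ^ e := by
      have h1 : 1 ≤ 3 ^ e := Nat.one_le_pow _ _ (by norm_num)
      calc N = 3 ^ e + (N - 3 ^ e) := (Nat.add_sub_cancel' h).symm
        _ ≤ 3 ^ e + (N - 3 ^ e) * 3 ^ e := by
            exact Nat.add_le_add_left (Nat.le_mul_of_pos_right _ (by omega)) _
        _ = (1 + (N - 3 ^ e)) * 3 ^ e := by ring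
    calc (N : ℝ) ≤ ((1 + (N - 3 ^ e)) * 3 ^ e : ℕ) := by exact_mod_cast hnat
      _ = (1 + ((N - 3 ^ e : ℕ) : ℝ)) * (3 : ℝ) ^ e := by push_cast; ring
  exact mul_le_mul_of_nonneg_right hb (by positivity)

lemma aux_le_one (d : ℕ) : (1 + (d : ℝ)) * (1 / 3 : ℝ) ^ d ≤ 1 := by
  have h : (d : ℝ) + 1 ≤ (3 : ℝ) ^ d := by
    exact_mod_cast Nat.succ_le_of_lt (Nat.lt_pow_self (n := d) (a := 3) (by norm_num))
  rw [div_pow, one_pow, mul_div_assoc', div_le_one (by positivity)]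
  linarith

lemma aux_le_pow (d : ℕ) : (1 + (d : ℝ)) * (1 / 3 : ℝ) ^ d ≤ (2 / 3 : ℝ) ^ d := by
  have h : (d : ℝ) + 1 ≤ (2 : ℝ) ^ d := by
    exact_mod_cast Nat.succ_le_of_lt (Nat.lt_two_pow_self (n := d))
  have : (2 / 3 : ℝ) ^ d = (2 : ℝ) ^ d * (1 / 3 : ℝ) ^ d := by
    rw [← mul_pow]; norm_num
  rw [this]
  exact mul_le_mul_of_nonneg_right (by linarith) (by positivity)

lemma g_nonneg (N : ℕ) : 0 ≤ g N := by
  have h : 0 ≤ pi13 N := by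
    unfold pi13
    have : 0 ≤ ∑ e ∈ (Finset.range (N + 1)).filter (fun e => 3 ^ e ≤ N),
        ((3 : ℝ) ^ (3 ^ e) / 3 ^ e) := Finset.sum_nonneg fun e _ => by positivity
    positivity
  unfold g
  positivity

lemma log_lt (E : ℕ) : E < 3 ^ E := Nat.lt_pow_self (n := E) (a := 3) (by norm_num)

lemma log_ge (E : ℕ) : E ≤ 3 ^ E := (log_lt E).le

/-- main upper bound -/
lemma g_le {N : ℕ} (hN : N ≠ 0) :
    g N ≤ 2 / 3 + ((N : ℝ) * (1 / 3 : ℝ) ^ N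
      + (2 / 3) * ((Nat.log 3 N : ℝ) * (2 / 3 : ℝ) ^ (Nat.log 3 N))) := by
  set E := Nat.log 3 N with hE
  have hpow : 3 ^ E ≤ N := Nat.pow_log_le_self 3 hN
  have hlt : N < 3 ^ (E + 1) := Nat.lt_pow_succ_log_self (by norm_num) N
  rw [g_eq hN, Finset.sum_range_succ]
  have htop : (N : ℝ) * ((3 : ℝ) ^ (3 ^ E) / 3 ^ E) / 3 ^ N ≤ 1 :=
    le_trans (term_le hpow) (aux_le_one _)
  have hsmall : ∑ e ∈ Finset.range E, ((N : ℝ) * ((3 : ℝ) ^ (3 ^ e) / 3 ^ e) / 3 ^ N)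
      ≤ (E : ℝ) * (2 / 3 : ℝ) ^ E := by
    have hterm : ∀ e ∈ Finset.range E,
        (N : ℝ) * ((3 : ℝ) ^ (3 ^ e) / 3 ^ e) / 3 ^ N ≤ (2 / 3 : ℝ) ^ E := by
      intro e he
      rw [Finset.mem_range] at he
      have hE1 : 1 ≤ E := Nat.one_le_iff_ne_zero.mpr (by omega)
      have h3e : 3 ^ e ≤ N := le_trans (Nat.pow_le_pow_right (by norm_num) (by omega)) hpow
      have hd : E ≤ N - 3 ^ e := by
        obtain ⟨F, hF⟩ : ∃ F, E = F + 1 := ⟨E - 1, by omega⟩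
        have h1 : 3 ^ e ≤ 3 ^ F := Nat.pow_le_pow_right (by norm_num) (by omega)
        have h2 : 3 ^ (F + 1) = 3 ^ F + 3 ^ F + 3 ^ F := by rw [pow_succ]; ring
        have h3 := log_ge F
        rw [hF] at hpow ⊢
        omega
      calc (N : ℝ) * ((3 : ℝ) ^ (3 ^ e) / 3 ^ e) / 3 ^ N
          ≤ (1 + ((N - 3 ^ e : ℕ) : ℝ)) * (1 / 3 : ℝ) ^ (N - 3 ^ e) := term_le h3e
        _ ≤ (2 / 3 : ℝ) ^ (N - 3 ^ e) := aux_le_pow _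
        _ ≤ (2 / 3 : ℝ) ^ E := by
            apply pow_le_pow_of_le_one (by norm_num) (by norm_num) hd
    calc ∑ e ∈ Finset.range E, ((N : ℝ) * ((3 : ℝ) ^ (3 ^ e) / 3 ^ e) / 3 ^ N)
        ≤ ∑ _e ∈ Finset.range E, (2 / 3 : ℝ) ^ E := Finset.sum_le_sum hterm
      _ = (E : ℝ) * (2 / 3 : ℝ) ^ E := by
          rw [Finset.sum_const, card_range, nsmul_eq_mul]
  have hfirst : (N : ℝ) / 3 ^ N = (N : ℝ) * (1 / 3 : ℝ) ^ N := by
    rw [div_pow, one_pow, mul_div_assoc']; ring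
  rw [hfirst]
  nlinarith [g_nonneg N]

end Pi13Aux

namespace Pi13Aux

noncomputable def u (N : ℕ) : ℝ :=
  (N : ℝ) * (1 / 3 : ℝ) ^ N + (2 / 3) * ((Nat.log 3 N : ℝ) * (2 / 3 : ℝ) ^ (Nat.log 3 N))

lemma g_le' {N : ℕ} (hN : N ≠ 0) : g N ≤ 2 / 3 + u N := g_le hN

lemma log_tendsto : Filter.Tendsto (Nat.log 3) atTop atTop :=
  tendsto_atTop_atTop_of_monotone (fun _ _ h => Nat.log_mono_right h)
    (fun b => ⟨3 ^ b, by rw [Nat.log_pow (by norm_num)]⟩)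

lemma u_tendsto : Filter.Tendsto u atTop (nhds 0) := by
  have t1 : Filter.Tendsto (fun n : ℕ => (n : ℝ) * (1 / 3 : ℝ) ^ n) atTop (nhds 0) :=
    tendsto_self_mul_const_pow_of_lt_one (by norm_num) (by norm_num)
  have t2 : Filter.Tendsto (fun n : ℕ => (n : ℝ) * (2 / 3 : ℝ) ^ n) atTop (nhds 0) :=
    tendsto_self_mul_const_pow_of_lt_one (by norm_num) (by norm_num)
  have t3 : Filter.Tendsto
      (fun N : ℕ => (2 / 3 : ℝ) * ((Nat.log 3 N : ℝ) * (2 / 3 : ℝ) ^ (Nat.log 3 N)))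
      atTop (nhds ((2 / 3) * 0)) := (Filter.Tendsto.comp t2 log_tendsto).const_mul _
  have := t1.add t3
  norm_num at this
  exact this

lemma g_pow_ge (k : ℕ) : 2 / 3 ≤ g (3 ^ k) := by
  have hN : (3 : ℕ) ^ k ≠ 0 := by positivity
  have hlog : Nat.log 3 (3 ^ k) = k := Nat.log_pow (by norm_num) k
  rw [g_eq hN, hlog]
  have hterm : (((3 : ℕ) ^ k : ℕ) : ℝ) * ((3 : ℝ) ^ (3 ^ k) / 3 ^ k) / 3 ^ ((3 : ℕ) ^ k) = 1 := by
    push_cast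
    rw [div_eq_one_iff_eq (by positivity)]
    field_simp
  have hmem : k ∈ Finset.range (k + 1) := Finset.mem_range.mpr (Nat.lt_succ_self k)
  have hsum : (1 : ℝ) ≤ ∑ e ∈ Finset.range (k + 1),
      (((3 : ℕ) ^ k : ℕ) : ℝ) * ((3 : ℝ) ^ (3 ^ e) / 3 ^ e) / 3 ^ ((3 : ℕ) ^ k) := by
    have h := Finset.single_le_sum
      (f := fun e => (((3 : ℕ) ^ k : ℕ) : ℝ) * ((3 : ℝ) ^ (3 ^ e) / 3 ^ e) / 3 ^ ((3 : ℕ) ^ k))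
      (fun e _ => by positivity) hmem
    rw [hterm] at h
    exact h
  have hfirst : (0 : ℝ) ≤ (((3 : ℕ) ^ k : ℕ) : ℝ) / 3 ^ ((3 : ℕ) ^ k) := by positivity
  nlinarith

lemma log_pred (k : ℕ) (hk : 1 ≤ k) : Nat.log 3 (3 ^ k - 1) = k - 1 := by
  have h1 : (3 : ℕ) ^ (k - 1) < 3 ^ k := Nat.pow_lt_pow_right (by norm_num) (by omega)
  have h0 : 1 ≤ (3 : ℕ) ^ (k - 1) := Nat.one_le_pow _ _ (by norm_num)
  have h0' : 1 ≤ (3 : ℕ) ^ k := Nat.one_le_pow _ _ (by norm_num)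
  apply Nat.log_eq_of_pow_le_of_lt_pow
  · omega
  · have hkk : k - 1 + 1 = k := by omega
    rw [hkk]; omega

lemma g_le2 {k : ℕ} (hk : 1 ≤ k) :
    g (3 ^ k - 1) ≤ (((3 ^ k - 1 : ℕ) : ℝ) * (1 / 3 : ℝ) ^ ((3 : ℕ) ^ k - 1)
      + (2 / 3) * ((k : ℝ) * (2 / 3 : ℝ) ^ k)) := by
  obtain ⟨F, rfl⟩ : ∃ F, k = F + 1 := ⟨k - 1, by omega⟩
  set N := 3 ^ (F + 1) - 1 with hNdef
  have h2 : 3 ^ F + 3 ^ F + 3 ^ F = 3 ^ (F + 1) := by rw [pow_succ]; ring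
  have h0F : 1 ≤ (3 : ℕ) ^ F := Nat.one_le_pow _ _ (by norm_num)
  have hN : N ≠ 0 := by omega
  have hlog : Nat.log 3 N = F := by
    have := log_pred (F + 1) (by omega)
    simpa using this
  rw [g_eq hN, hlog]
  have hterm : ∀ e ∈ Finset.range (F + 1),
      (N : ℝ) * ((3 : ℝ) ^ (3 ^ e) / 3 ^ e) / 3 ^ N ≤ (2 / 3 : ℝ) ^ (F + 1) := by
    intro e he
    rw [Finset.mem_range] at he
    have hle : (3 : ℕ) ^ e ≤ 3 ^ F := Nat.pow_le_pow_right (by norm_num) (by omega)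
    have hk3 : F + 1 ≤ 3 ^ F := by
      have := log_lt F; omega
    have h3e : 3 ^ e ≤ N := by omega
    have hd : F + 1 ≤ N - 3 ^ e := by omega
    calc (N : ℝ) * ((3 : ℝ) ^ (3 ^ e) / 3 ^ e) / 3 ^ N
        ≤ (1 + ((N - 3 ^ e : ℕ) : ℝ)) * (1 / 3 : ℝ) ^ (N - 3 ^ e) := term_le h3e
      _ ≤ (2 / 3 : ℝ) ^ (N - 3 ^ e) := aux_le_pow _
      _ ≤ (2 / 3 : ℝ) ^ (F + 1) := pow_le_pow_of_le_one (by norm_num) (by norm_num) hd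
  have hsum : ∑ e ∈ Finset.range (F + 1), ((N : ℝ) * ((3 : ℝ) ^ (3 ^ e) / 3 ^ e) / 3 ^ N)
      ≤ ((F + 1 : ℕ) : ℝ) * (2 / 3 : ℝ) ^ (F + 1) := by
    calc ∑ e ∈ Finset.range (F + 1), ((N : ℝ) * ((3 : ℝ) ^ (3 ^ e) / 3 ^ e) / 3 ^ N)
        ≤ ∑ _e ∈ Finset.range (F + 1), (2 / 3 : ℝ) ^ (F + 1) := Finset.sum_le_sum hterm
      _ = ((F + 1 : ℕ) : ℝ) * (2 / 3 : ℝ) ^ (F + 1) := by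
          rw [Finset.sum_const, card_range, nsmul_eq_mul]
  have hfirst : (N : ℝ) / 3 ^ N = (N : ℝ) * (1 / 3 : ℝ) ^ N := by
    rw [div_pow, one_pow, mul_div_assoc']; ring
  rw [hfirst]
  push_cast at hsum ⊢
  nlinarith

lemma seq_tendsto : Filter.Tendsto (fun k : ℕ => 3 ^ k - 1 : ℕ → ℕ) atTop atTop :=
  tendsto_atTop_atTop_of_monotone
    (fun a b h => Nat.sub_le_sub_right (Nat.pow_le_pow_right (by norm_num) h) 1)
    (fun b => ⟨b + 1, by have := log_ge (b + 1); omega⟩)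

lemma w_tendsto : Filter.Tendsto
    (fun k : ℕ => (((3 ^ k - 1 : ℕ) : ℝ) * (1 / 3 : ℝ) ^ ((3 : ℕ) ^ k - 1)
      + (2 / 3) * ((k : ℝ) * (2 / 3 : ℝ) ^ k))) atTop (nhds 0) := by
  have t1 : Filter.Tendsto (fun n : ℕ => (n : ℝ) * (1 / 3 : ℝ) ^ n) atTop (nhds 0) :=
    tendsto_self_mul_const_pow_of_lt_one (by norm_num) (by norm_num)
  have t2 : Filter.Tendsto (fun n : ℕ => (n : ℝ) * (2 / 3 : ℝ) ^ n) atTop (nhds 0) :=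
    tendsto_self_mul_const_pow_of_lt_one (by norm_num) (by norm_num)
  have t1' := Filter.Tendsto.comp t1 seq_tendsto
  have := t1'.add (t2.const_mul (2 / 3 : ℝ))
  norm_num at this ⊢
  exact this

lemma g_bounded_above : ∀ᶠ N in atTop, g N ≤ 2 / 3 + 1 := by
  have h1 : ∀ᶠ N in atTop, u N < 1 := u_tendsto.eventually (gt_mem_nhds one_pos)
  have h2 : ∀ᶠ N : ℕ in atTop, N ≠ 0 := by
    filter_upwards [Filter.eventually_ge_atTop 1] with N hN; omega
  filter_upwards [h1, h2] with N h1 h2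
  have := g_le' h2
  linarith

lemma isBdd_le : Filter.IsBoundedUnder (· ≤ ·) atTop g :=
  ⟨2 / 3 + 1, Filter.eventually_map.mpr g_bounded_above⟩

lemma isBdd_ge : Filter.IsBoundedUnder (· ≥ ·) atTop g :=
  Filter.isBoundedUnder_of ⟨0, fun N => g_nonneg N⟩

lemma limsup_g : Filter.limsup g atTop = 2 / 3 := by
  apply le_antisymm
  · by_contra hcon
    push_neg at hcon
    set ε := (Filter.limsup g atTop - 2 / 3) / 2 with hε
    have hεpos : 0 < ε := by rw [hε]; linarith
    have hev : ∀ᶠ N in atTop, g N ≤ 2 / 3 + ε := by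
      have h1 : ∀ᶠ N in atTop, u N < ε := u_tendsto.eventually (gt_mem_nhds hεpos)
      have h2 : ∀ᶠ N : ℕ in atTop, N ≠ 0 := by
        filter_upwards [Filter.eventually_ge_atTop 1] with N hN; omega
      filter_upwards [h1, h2] with N h1 h2
      have := g_le' h2
      linarith
    have := Filter.limsup_le_of_le isBdd_ge.isCoboundedUnder_le hev
    rw [hε] at this
    linarith
  · apply Filter.le_limsup_of_frequently_le _ isBdd_le
    have hpow : Filter.Tendsto (fun k : ℕ => 3 ^ k : ℕ → ℕ) atTop atTop :=
      tendsto_pow_atTop_atTop_of_one_lt (by norm_num)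
    exact hpow.frequently ((Filter.Eventually.of_forall g_pow_ge).frequently)

lemma liminf_g : Filter.liminf g atTop = 0 := by
  apply le_antisymm
  · by_contra hcon
    push_neg at hcon
    set ε := Filter.liminf g atTop / 2 with hε
    have hεpos : 0 < ε := by rw [hε]; linarith
    have hfreq : ∃ᶠ N in atTop, g N ≤ ε := by
      apply seq_tendsto.frequently
      apply Filter.Eventually.frequently
      have h1 : ∀ᶠ k : ℕ in atTop, (((3 ^ k - 1 : ℕ) : ℝ) * (1 / 3 : ℝ) ^ ((3 : ℕ) ^ k - 1)
          + (2 / 3) * ((k : ℝ) * (2 / 3 : ℝ) ^ k)) < ε := w_tendsto.eventually (gt_mem_nhds hεpos)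
      filter_upwards [h1, Filter.eventually_ge_atTop 1] with k h1 hk
      have := g_le2 hk
      linarith
    have := Filter.liminf_le_of_frequently_le hfreq isBdd_ge
    rw [hε] at this
    linarith
  · exact Filter.le_liminf_of_le isBdd_le.isCoboundedUnder_ge
      (Filter.Eventually.of_forall g_nonneg)

end Pi13Aux

theorem limsup_liminf_F3t :
    Filter.limsup (fun N : ℕ => (N : ℝ) * pi13 N / 3 ^ N) Filter.atTop = 2 / 3 ∧
    Filter.liminf (fun N : ℕ => (N : ℝ) * pi13 N / 3 ^ N) Filter.atTop = 0 := by
  have hg : (fun N : ℕ => (N : ℝ) * pi13 N / 3 ^ N) = Pi13Aux.g := rfl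
  rw [hg]
  exact ⟨Pi13Aux.limsup_g, Pi13Aux.liminf_g⟩
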